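/- arXiv:2208.13291 — 2 statements merged into one kernel-verified Lean document; each statement's English description precedes it below -/
import Mathlib

section
/- Let λ > 1. Every RPG basis is (λ, RPGII). -/
open Finset Filter

noncomputable section

variable {X : Type*} [NormedAddCommGroup X] [NormedSpace ℝ X]

/-- Projection `P_A x = ∑_{n ∈ A} e_n^*(x) e_n`. -/
def proj (f : ℕ → X →L[ℝ] ℝ) (e : ℕ → X) (A : Finset ℕ) (x : X) : X :=
  ∑ n ∈ A, f n x • e n

/-- `Λ` is a greedy set of `x`. -/
def GreedySet (f : ℕ → X →L[ℝ] ℝ) (x : X) (Λ : Finset ℕ) : Prop :=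
  ∀ n ∈ Λ, ∀ m, m ∉ Λ → |f m x| ≤ |f n x|

/-- A (biorthogonal, norm-bounded, fundamental) basis system. -/
structure BasisSystem (f : ℕ → X →L[ℝ] ℝ) (e : ℕ → X) : Prop where
  biorth : ∀ n m, f n (e m) = if n = m then (1 : ℝ) else 0
  dense : Dense (Submodule.span ℝ (Set.range e) : Set X)
  bounded : ∃ c₁ c₂ : ℝ, 0 < c₁ ∧ ∀ n, c₁ ≤ ‖e n‖ ∧ ‖e n‖ ≤ c₂ ∧ ‖f n‖ ≤ c₂

/-- `σ̌^Λ_m(x)`: inf of `‖x - P_I x‖` over `I = ∅` or intervals `I` with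
`Λ ≤ max I` and `|I| ≤ m`. -/
def checkSigma (f : ℕ → X →L[ℝ] ℝ) (e : ℕ → X) (Λ : Finset ℕ) (m : ℕ) (x : X) : ℝ :=
  sInf {r : ℝ | ∃ I : Finset ℕ,
    (I = ∅ ∨ ∃ a b : ℕ, a ≤ b ∧ I = Finset.Icc a b ∧ ∀ n ∈ Λ, n ≤ b) ∧
    I.card ≤ m ∧ r = ‖x - proj f e I x‖}

/-- `σ̂^Λ_m(x)`: inf of `‖x - P_I x‖` over `I = ∅` or intervals `I` with
`min I ≤ Λ` and `|I| ≤ m`. -/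
def hatSigma (f : ℕ → X →L[ℝ] ℝ) (e : ℕ → X) (Λ : Finset ℕ) (m : ℕ) (x : X) : ℝ :=
  sInf {r : ℝ | ∃ I : Finset ℕ,
    (I = ∅ ∨ ∃ a b : ℕ, a ≤ b ∧ I = Finset.Icc a b ∧ ∀ n ∈ Λ, a ≤ n) ∧
    I.card ≤ m ∧ r = ‖x - proj f e I x‖}

/-- `σ̃^{R,Λ}_m(x)`: inf of `‖x - P_A x‖` over `|A| ≤ m`, `A > Λ`. -/
def revSigma (f : ℕ → X →L[ℝ] ℝ) (e : ℕ → X) (Λ : Finset ℕ) (m : ℕ) (x : X) : ℝ :=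
  sInf {r : ℝ | ∃ A : Finset ℕ, A.card ≤ m ∧ (∀ n ∈ Λ, ∀ a ∈ A, n < a) ∧
    r = ‖x - proj f e A x‖}

/-- Reverse partially greedy with constant `C`. -/
def RPG (f : ℕ → X →L[ℝ] ℝ) (e : ℕ → X) (C : ℝ) : Prop :=
  ∀ (x : X) (m : ℕ) (Λ : Finset ℕ), Λ.card = m → GreedySet f x Λ →
    ‖x - proj f e Λ x‖ ≤ C * revSigma f e Λ m x

/-- `(λ, RPGII)` with constant `C`. -/
def RPGII (f : ℕ → X →L[ℝ] ℝ) (e : ℕ → X) (l C : ℝ) : Prop :=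
  ∀ (x : X) (m : ℕ) (Λ : Finset ℕ), Λ.card = ⌈l * (m : ℝ)⌉₊ → GreedySet f x Λ →
    ‖x - proj f e Λ x‖ ≤ C * checkSigma f e Λ m x

/-- Quasi-greedy with constant `C`. -/
def QG (f : ℕ → X →L[ℝ] ℝ) (e : ℕ → X) (C : ℝ) : Prop :=
  ∀ (x : X) (Λ : Finset ℕ), GreedySet f x Λ → ‖proj f e Λ x‖ ≤ C * ‖x‖

/-- Suppression quasi-greedy with constant `C`. -/
def SuppQG (f : ℕ → X →L[ℝ] ℝ) (e : ℕ → X) (C : ℝ) : Prop :=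
  ∀ (x : X) (Λ : Finset ℕ), GreedySet f x Λ → ‖x - proj f e Λ x‖ ≤ C * ‖x‖

/-- Reverse conservative with constant `C`. -/
def RevConservative (e : ℕ → X) (C : ℝ) : Prop :=
  ∀ A B : Finset ℕ, (∀ b ∈ B, ∀ a ∈ A, b < a) → A.card ≤ B.card →
    ‖∑ n ∈ A, e n‖ ≤ C * ‖∑ n ∈ B, e n‖

/-- `s(A) = max A - min A + 1` (and `s(∅) = 0`). -/
def spread (A : Finset ℕ) : ℕ :=
  if h : A.Nonempty then A.max' h - A.min' h + 1 else 0

/-- `(λ, reverse conservative of type II)` with constant `C`. -/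
def RevConsII (e : ℕ → X) (l C : ℝ) : Prop :=
  ∀ A B : Finset ℕ, (l - 1) * spread A + (A.card : ℝ) ≤ (B.card : ℝ) →
    (∀ b ∈ B, ∀ a ∈ A, b < a) → ‖∑ n ∈ A, e n‖ ≤ C * ‖∑ n ∈ B, e n‖

/-- `x` surrounds `A`: `supp x ∩ [min A, max A] = ∅` (vacuous for `A = ∅`). -/
def Surrounds (f : ℕ → X →L[ℝ] ℝ) (x : X) (A : Finset ℕ) : Prop :=
  ∀ a ∈ A, ∀ b ∈ A, ∀ n, a ≤ n → n ≤ b → f n x = 0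

/-- `(λ, RPSLC)` with constant `Δ`. -/
def RPSLC (f : ℕ → X →L[ℝ] ℝ) (e : ℕ → X) (l Δ : ℝ) : Prop :=
  ∀ x : X, (∀ n, |f n x| ≤ 1) →
    ∀ ε δ : ℕ → ℝ, (∀ n, |ε n| = 1) → (∀ n, |δ n| = 1) →
    ∀ A B : Finset ℕ, (l - 1) * spread A + (A.card : ℝ) ≤ (B.card : ℝ) →
    (∀ n ∈ B, f n x = 0) → (∀ b ∈ B, ∀ a ∈ A, b < a) → Surrounds f x A →
    ‖x + ∑ n ∈ A, ε n • e n‖ ≤ Δ * ‖x + ∑ n ∈ B, δ n • e n‖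

section AuxLemmas

variable {f : ℕ → X →L[ℝ] ℝ} {e : ℕ → X}

lemma coeff_sum (hbi : ∀ n m, f n (e m) = if n = m then (1 : ℝ) else 0)
    (c : ℕ → ℝ) (A : Finset ℕ) (n : ℕ) :
    f n (∑ k ∈ A, c k • e k) = if n ∈ A then c n else 0 := by
  rw [map_sum]
  simp only [map_smul, hbi, smul_eq_mul, mul_ite, mul_one, mul_zero]
  exact Finset.sum_ite_eq A n c

lemma coeff_sub_proj (hbi : ∀ n m, f n (e m) = if n = m then (1 : ℝ) else 0)
    (I : Finset ℕ) (x : X) (n : ℕ) :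
    f n (x - proj f e I x) = if n ∈ I then 0 else f n x := by
  rw [map_sub, proj, coeff_sum hbi]
  split <;> simp

lemma conv_nonneg (e : ℕ → X) (A : Finset ℕ) :
    ∀ (a : ℕ → ℝ) (t M : ℝ), 0 ≤ t → 0 ≤ M →
    (∀ n ∈ A, 0 ≤ a n ∧ a n ≤ t) → (∀ D ⊆ A, ‖∑ n ∈ D, e n‖ ≤ M) →
    ‖∑ n ∈ A, a n • e n‖ ≤ t * M := by
  induction A using Finset.strongInduction with
  | _ A ih =>
    intro a t M ht hM ha hD
    rcases A.eq_empty_or_nonempty with rfl | hne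
    · simpa using by positivity
    obtain ⟨n₀, hn₀, hmin⟩ := A.exists_min_image a hne
    have h0 : (0:ℝ) ≤ a n₀ := (ha n₀ hn₀).1
    have h1 : a n₀ ≤ t := (ha n₀ hn₀).2
    have key : ∑ n ∈ A, a n • e n
        = a n₀ • (∑ n ∈ A, e n) + ∑ n ∈ A.erase n₀, (a n - a n₀) • e n := by
      rw [Finset.sum_erase _ (by simp), Finset.smul_sum, ← Finset.sum_add_distrib]
      refine Finset.sum_congr rfl fun n _ => ?_
      rw [← add_smul]; ring_nf
    rw [key]
    have hIH : ‖∑ n ∈ A.erase n₀, (a n - a n₀) • e n‖ ≤ (t - a n₀) * M := by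
      refine ih (A.erase n₀) (Finset.erase_ssubset hn₀) _ _ _ (by linarith) hM
        (fun n hn => ⟨by have := hmin n (Finset.mem_of_mem_erase hn); linarith,
          by have := (ha n (Finset.mem_of_mem_erase hn)).2; linarith⟩)
        (fun D hDsub => hD D (hDsub.trans (Finset.erase_subset _ _)))
    calc ‖a n₀ • (∑ n ∈ A, e n) + ∑ n ∈ A.erase n₀, (a n - a n₀) • e n‖
        ≤ ‖a n₀ • (∑ n ∈ A, e n)‖ + ‖∑ n ∈ A.erase n₀, (a n - a n₀) • e n‖ := norm_add_le _ _
      _ ≤ a n₀ * M + (t - a n₀) * M := by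
          refine add_le_add ?_ hIH
          rw [norm_smul, Real.norm_eq_abs, abs_of_nonneg h0]
          exact mul_le_mul_of_nonneg_left (hD A subset_rfl) h0
      _ = t * M := by ring

lemma conv_signed (e : ℕ → X) (A : Finset ℕ) (a : ℕ → ℝ) (t M : ℝ)
    (ht : 0 ≤ t) (hM : 0 ≤ M) (ha : ∀ n ∈ A, |a n| ≤ t)
    (hD : ∀ D ⊆ A, ‖∑ n ∈ D, e n‖ ≤ M) :
    ‖∑ n ∈ A, a n • e n‖ ≤ 2 * t * M := by
  have hsplit := Finset.sum_filter_add_sum_filter_not A (fun n => 0 ≤ a n) (fun n => a n • e n)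
  rw [← hsplit]
  have h1 : ‖∑ n ∈ A.filter (fun n => 0 ≤ a n), a n • e n‖ ≤ t * M := by
    refine conv_nonneg e _ a t M ht hM (fun n hn => ?_)
      (fun D hDs => hD D (hDs.trans (Finset.filter_subset _ _)))
    rw [Finset.mem_filter] at hn
    exact ⟨hn.2, (le_abs_self _).trans (ha n hn.1)⟩
  have h2 : ‖∑ n ∈ A.filter (fun n => ¬ 0 ≤ a n), a n • e n‖ ≤ t * M := by
    have : ∑ n ∈ A.filter (fun n => ¬ 0 ≤ a n), a n • e n
        = - ∑ n ∈ A.filter (fun n => ¬ 0 ≤ a n), (-a n) • e n := by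
      rw [← Finset.sum_neg_distrib]; refine Finset.sum_congr rfl fun n _ => by simp
    rw [this, norm_neg]
    refine conv_nonneg e _ (fun n => -a n) t M ht hM (fun n hn => ?_)
      (fun D hDs => hD D (hDs.trans (Finset.filter_subset _ _)))
    rw [Finset.mem_filter] at hn
    refine ⟨show (0:ℝ) ≤ -a n by linarith [hn.2], show -a n ≤ t from ?_⟩
    have := ha n hn.1; rw [abs_of_neg (by linarith [hn.2])] at this; linarith
  calc _ ≤ _ := norm_add_le _ _
    _ ≤ t * M + t * M := add_le_add h1 h2
    _ = 2 * t * M := by ring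

lemma trunc_abel (f : ℕ → X →L[ℝ] ℝ) (e : ℕ → X) (z : X) (c : ℕ → ℝ) (K : ℝ)
    (hK : 0 ≤ K)
    (hproj : ∀ D : Finset ℕ, GreedySet f z D → ‖proj f e D z‖ ≤ K)
    (B : Finset ℕ) :
    GreedySet f z B →
    (∀ n ∈ B, ∀ m ∈ B, |f n z| ≤ |f m z| → c m ≤ c n) →
    ∀ r : ℝ, (∀ n ∈ B, r ≤ c n) →
    ∀ n₀ ∈ B, (∀ n ∈ B, |f n₀ z| ≤ |f n z|) →
    ‖(∑ n ∈ B, (c n * f n z) • e n) - c n₀ • proj f e B z‖ ≤ (c n₀ - r) * K := by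
  induction B using Finset.strongInduction with
  | _ B ih =>
    intro hG hanti r hr n₀ hn₀ hmin
    have hrc : r ≤ c n₀ := hr n₀ hn₀
    have hsum : ∑ n ∈ B, (c n * f n z) • e n
        = (∑ n ∈ B.erase n₀, (c n * f n z) • e n) + (c n₀ * f n₀ z) • e n₀ :=
      (Finset.sum_erase_add B _ hn₀).symm
    have hprojB : proj f e B z = proj f e (B.erase n₀) z + f n₀ z • e n₀ :=
      (Finset.sum_erase_add B _ hn₀).symm
    have hcancel : (∑ n ∈ B, (c n * f n z) • e n) - c n₀ • proj f e B z
        = (∑ n ∈ B.erase n₀, (c n * f n z) • e n) - c n₀ • proj f e (B.erase n₀) z := by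
      rw [hsum, hprojB, smul_add, smul_smul]; abel
    rw [hcancel]
    rcases (B.erase n₀).eq_empty_or_nonempty with he | hne
    · rw [he]
      simp only [Finset.sum_empty, proj, smul_zero, sub_zero, norm_zero]
      exact mul_nonneg (by linarith) hK
    · obtain ⟨n₁, hn₁, hmin₁⟩ := (B.erase n₀).exists_min_image (fun n => |f n z|) hne
      have hB'G : GreedySet f z (B.erase n₀) := by
        intro n hn m hm
        by_cases hmB : m ∈ B
        · have hmn₀ : m = n₀ := by
            by_contra hne'
            exact hm (Finset.mem_erase.2 ⟨hne', hmB⟩)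
          subst hmn₀
          exact hmin n (Finset.mem_of_mem_erase hn)
        · exact hG n (Finset.mem_of_mem_erase hn) m hmB
      have hc₁₀ : c n₁ ≤ c n₀ :=
        hanti n₀ hn₀ n₁ (Finset.mem_of_mem_erase hn₁) (hmin n₁ (Finset.mem_of_mem_erase hn₁))
      have hIH : ‖(∑ n ∈ B.erase n₀, (c n * f n z) • e n)
          - c n₁ • proj f e (B.erase n₀) z‖ ≤ (c n₁ - r) * K :=
        ih (B.erase n₀) (Finset.erase_ssubset hn₀) hB'G
          (fun n hn m hm h => hanti n (Finset.mem_of_mem_erase hn) m (Finset.mem_of_mem_erase hm) h)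
          r (fun n hn => hr n (Finset.mem_of_mem_erase hn)) n₁ hn₁ hmin₁
      have hdec : (∑ n ∈ B.erase n₀, (c n * f n z) • e n) - c n₀ • proj f e (B.erase n₀) z
          = ((∑ n ∈ B.erase n₀, (c n * f n z) • e n) - c n₁ • proj f e (B.erase n₀) z)
            + (c n₁ - c n₀) • proj f e (B.erase n₀) z := by
        rw [sub_smul]; abel
      rw [hdec]
      calc _ ≤ ‖(∑ n ∈ B.erase n₀, (c n * f n z) • e n)
            - c n₁ • proj f e (B.erase n₀) z‖
            + ‖(c n₁ - c n₀) • proj f e (B.erase n₀) z‖ := norm_add_le _ _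
        _ ≤ (c n₁ - r) * K + (c n₀ - c n₁) * K := by
            refine add_le_add hIH ?_
            rw [norm_smul, Real.norm_eq_abs, abs_of_nonpos (by linarith)]
            have h5 := hproj _ hB'G
            calc -(c n₁ - c n₀) * ‖proj f e (B.erase n₀) z‖
                ≤ -(c n₁ - c n₀) * K := mul_le_mul_of_nonneg_left h5 (by linarith)
              _ = (c n₀ - c n₁) * K := by ring
        _ = (c n₀ - r) * K := by ring

lemma suppQG_of_RPG (C : ℝ) (hC : 1 ≤ C) (hrpg : RPG f e C) : SuppQG f e C := by
  intro x Λ hG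
  have h1 := hrpg x Λ.card Λ rfl hG
  refine h1.trans (mul_le_mul_of_nonneg_left ?_ (by linarith))
  refine csInf_le ⟨0, ?_⟩ ⟨∅, by simp, by simp, by simp [proj]⟩
  rintro r ⟨A, -, -, rfl⟩
  exact norm_nonneg _

lemma proj_norm_le (C : ℝ) (hC : 1 ≤ C) (hs : SuppQG f e C) (z : X) (D : Finset ℕ)
    (hD : GreedySet f z D) : ‖proj f e D z‖ ≤ (C + 1) * ‖z‖ := by
  have h1 := hs z D hD
  calc ‖proj f e D z‖ = ‖z - (z - proj f e D z)‖ := by rw [sub_sub_cancel]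
    _ ≤ ‖z‖ + ‖z - proj f e D z‖ := norm_sub_le _ _
    _ ≤ (C + 1) * ‖z‖ := by linarith

lemma revCons_of_RPG (hbi : ∀ n m, f n (e m) = if n = m then (1 : ℝ) else 0)
    (C : ℝ) (hC : 1 ≤ C) (hrpg : RPG f e C) : RevConservative e C := by
  intro A B hord hcard
  rcases A.eq_empty_or_nonempty with rfl | hAne
  · simp only [Finset.sum_empty, norm_zero]
    positivity
  have hBne : B.Nonempty := by
    rcases B.eq_empty_or_nonempty with rfl | h
    · simp only [Finset.card_empty, Nat.le_zero, Finset.card_eq_zero] at hcard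
      exact absurd hcard hAne.ne_empty
    · exact h
  have hdisj : Disjoint A B := by
    rw [Finset.disjoint_left]
    intro n hnA hnB
    exact lt_irrefl n (hord n hnB n hnA)
  set x : X := ∑ n ∈ A ∪ B, e n with hxdef
  have hfx : ∀ n, f n x = if n ∈ A ∪ B then 1 else 0 := by
    intro n
    have : x = ∑ k ∈ A ∪ B, (1:ℝ) • e k := by simp [hxdef]
    rw [this, coeff_sum hbi]
  have hGB : GreedySet f x B := by
    intro n hn m hm
    rw [hfx, hfx, if_pos (Finset.mem_union_right _ hn)]
    split <;> simp
  have hPB : proj f e B x = ∑ n ∈ B, e n := by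
    refine Finset.sum_congr rfl fun n hn => ?_
    rw [hfx, if_pos (Finset.mem_union_right _ hn), one_smul]
  have hPA : proj f e A x = ∑ n ∈ A, e n := by
    refine Finset.sum_congr rfl fun n hn => ?_
    rw [hfx, if_pos (Finset.mem_union_left _ hn), one_smul]
  have hxAB : x = (∑ n ∈ A, e n) + (∑ n ∈ B, e n) := (Finset.sum_union hdisj)
  have h1 := hrpg x B.card B rfl hGB
  have h2 : x - proj f e B x = ∑ n ∈ A, e n := by rw [hPB, hxAB]; abel
  have h3 : x - proj f e A x = ∑ n ∈ B, e n := by rw [hPA, hxAB]; abel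
  rw [h2] at h1
  refine h1.trans (mul_le_mul_of_nonneg_left ?_ (by linarith))
  refine csInf_le ⟨0, ?_⟩ ⟨A, hcard, hord, h3.symm ▸ rfl⟩
  rintro r ⟨D, -, -, rfl⟩
  exact norm_nonneg _

lemma ind_subset (hbi : ∀ n m, f n (e m) = if n = m then (1 : ℝ) else 0)
    (C : ℝ) (hC : 1 ≤ C) (hs : SuppQG f e C) (A D : Finset ℕ) (hD : D ⊆ A) :
    ‖∑ n ∈ D, e n‖ ≤ (C + 1) * ‖∑ n ∈ A, e n‖ := by
  set z : X := ∑ n ∈ A, e n with hzdef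
  have hfz : ∀ n, f n z = if n ∈ A then 1 else 0 := by
    intro n
    have : z = ∑ k ∈ A, (1:ℝ) • e k := by simp [hzdef]
    rw [this, coeff_sum hbi]
  have hGD : GreedySet f z D := by
    intro n hn m hm
    rw [hfz, hfz, if_pos (hD hn)]
    split <;> simp
  have hPD : proj f e D z = ∑ n ∈ D, e n := by
    refine Finset.sum_congr rfl fun n hn => ?_
    rw [hfz, if_pos (hD hn), one_smul]
  rw [← hPD]
  exact proj_norm_le C hC hs z D hGD

lemma ind_of_signed (hbi : ∀ n m, f n (e m) = if n = m then (1 : ℝ) else 0)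
    (C : ℝ) (hC : 1 ≤ C) (hs : SuppQG f e C) (G : Finset ℕ) (s : ℕ → ℝ)
    (hsgn : ∀ n ∈ G, |s n| = 1) :
    ‖∑ n ∈ G, e n‖ ≤ 2 * (C + 1) * ‖∑ n ∈ G, s n • e n‖ := by
  set w : X := ∑ n ∈ G, s n • e n with hwdef
  have hfw : ∀ n, f n w = if n ∈ G then s n else 0 := fun n => coeff_sum hbi s G n
  have hgreedy : ∀ D ⊆ G, GreedySet f w D := by
    intro D hDG n hn m hm
    rw [hfw, hfw, if_pos (hDG hn), hsgn n (hDG hn)]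
    split
    · next h => rw [hsgn m h]
    · simp
  set Gp := G.filter (fun n => 0 ≤ s n) with hGp
  set Gm := G.filter (fun n => ¬ 0 ≤ s n) with hGm
  have hPp : proj f e Gp w = ∑ n ∈ Gp, e n := by
    refine Finset.sum_congr rfl fun n hn => ?_
    rw [Finset.mem_filter] at hn
    rw [hfw, if_pos hn.1]
    have : s n = 1 := by
      have := hsgn n hn.1; rw [abs_of_nonneg hn.2] at this; exact this
    rw [this, one_smul]
  have hPm : proj f e Gm w = - ∑ n ∈ Gm, e n := by
    rw [← Finset.sum_neg_distrib]
    refine Finset.sum_congr rfl fun n hn => ?_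
    rw [Finset.mem_filter] at hn
    rw [hfw, if_pos hn.1]
    have : s n = -1 := by
      have := hsgn n hn.1; rw [abs_of_neg (by linarith [lt_of_not_ge hn.2])] at this; linarith
    rw [this]; simp
  have hsplit : ∑ n ∈ G, e n = proj f e Gp w - proj f e Gm w := by
    rw [hPp, hPm, sub_neg_eq_add]
    exact (Finset.sum_filter_add_sum_filter_not G _ _).symm
  rw [hsplit]
  have b1 := proj_norm_le C hC hs w Gp (hgreedy Gp (Finset.filter_subset _ _))
  have b2 := proj_norm_le C hC hs w Gm (hgreedy Gm (Finset.filter_subset _ _))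
  calc ‖proj f e Gp w - proj f e Gm w‖ ≤ ‖proj f e Gp w‖ + ‖proj f e Gm w‖ := norm_sub_le _ _
    _ ≤ (C + 1) * ‖w‖ + (C + 1) * ‖w‖ := add_le_add b1 b2
    _ = 2 * (C + 1) * ‖w‖ := by ring

end AuxLemmas

set_option maxHeartbeats 1000000 in
/-- for `λ > 1`, every RPG basis is (λ, RPGII). -/
theorem stmt_13 [CompleteSpace X] (f : ℕ → X →L[ℝ] ℝ) (e : ℕ → X)
    (hb : BasisSystem f e) (l : ℝ) (hl : 1 < l)
    (h : ∃ C : ℝ, 1 ≤ C ∧ RPG f e C) :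
    ∃ C : ℝ, 1 ≤ C ∧ RPGII f e l C := by
  classical
  obtain ⟨C, hC, hrpg⟩ := h
  have hbi := hb.biorth
  have hC0 : (0:ℝ) < C := lt_of_lt_of_le one_pos hC
  have hsupp : SuppQG f e C := suppQG_of_RPG C hC hrpg
  have hrc : RevConservative e C := revCons_of_RPG hbi C hC hrpg
  set Q : ℝ := C + 1 with hQdef
  have hQ0 : (0:ℝ) < Q := by simp only [hQdef]; linarith
  set C' : ℝ := C + 8 * C * Q ^ 2 with hC'def
  have hC'C : C ≤ C' := by
    have : (0:ℝ) ≤ 8 * C * Q ^ 2 := by positivity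
    simp only [hC'def]; linarith
  have hC'1 : (1:ℝ) ≤ C' := le_trans hC hC'C
  have hC'0 : (0:ℝ) < C' := lt_of_lt_of_le one_pos hC'1
  refine ⟨C', hC'1, ?_⟩
  intro x m Λ hcard hG
  -- key pointwise estimate
  have hkey : ∀ I : Finset ℕ,
      (I = ∅ ∨ ∃ a b : ℕ, a ≤ b ∧ I = Finset.Icc a b ∧ ∀ n ∈ Λ, n ≤ b) →
      I.card ≤ m → ‖x - proj f e Λ x‖ ≤ C' * ‖x - proj f e I x‖ := by
    rintro I (rfl | ⟨a, b, hab, rfl, hΛb⟩) hIcard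
    · -- I = ∅
      have h0 : proj f e (∅ : Finset ℕ) x = 0 := by simp [proj]
      rw [h0, sub_zero]
      have h1 := hsupp x Λ hG
      have h2 : C * ‖x‖ ≤ C' * ‖x‖ := mul_le_mul_of_nonneg_right hC'C (norm_nonneg _)
      linarith
    · set I : Finset ℕ := Finset.Icc a b with hIdef
      have hIcard1 : 1 ≤ I.card := by
        rw [hIdef, Nat.card_Icc]; omega
      have hm1 : 1 ≤ m := le_trans hIcard1 hIcard
      have hmΛ : m ≤ Λ.card := by
        rw [hcard]
        have h1 : (m:ℝ) ≤ l * m := le_mul_of_one_le_left (Nat.cast_nonneg m) hl.le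
        calc m = ⌈(m:ℝ)⌉₊ := (Nat.ceil_natCast m).symm
          _ ≤ ⌈l * (m:ℝ)⌉₊ := Nat.ceil_le_ceil h1
      have hΛne : Λ.Nonempty := Finset.card_pos.mp (lt_of_lt_of_le hm1 hmΛ)
      set y : X := x - proj f e I x with hydef
      set G : Finset ℕ := Λ \ I with hGdef
      set A' : Finset ℕ := I \ Λ with hA'def
      have hfy : ∀ n, f n y = if n ∈ I then 0 else f n x := fun n => coeff_sub_proj hbi I x n
      have hGgreedy : GreedySet f y G := by
        intro n hn m' hm'
        rw [hGdef, Finset.mem_sdiff] at hn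
        rw [hfy, hfy, if_neg hn.2]
        by_cases hmI : m' ∈ I
        · rw [if_pos hmI]; simp
        · rw [if_neg hmI]
          have hm'Λ : m' ∉ Λ := fun hc => hm' (Finset.mem_sdiff.2 ⟨hc, hmI⟩)
          exact hG n hn.1 m' hm'Λ
      set t : ℝ := Λ.inf' hΛne (fun n => |f n x|) with htdef
      have ht0 : 0 ≤ t := Finset.le_inf' hΛne _ (fun n _ => abs_nonneg _)
      have htA : ∀ n ∈ A', |f n x| ≤ t := by
        intro n hn
        rw [hA'def, Finset.mem_sdiff] at hn
        exact Finset.le_inf' hΛne _ (fun k hk => hG k hk n hn.2)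
      have htG : ∀ n ∈ G, t ≤ |f n y| := by
        intro n hn
        rw [hGdef, Finset.mem_sdiff] at hn
        rw [hfy, if_neg hn.2]
        exact Finset.inf'_le _ hn.1
      -- decomposition
      have hPGy : proj f e G y = proj f e G x := by
        refine Finset.sum_congr rfl fun n hn => ?_
        rw [hGdef, Finset.mem_sdiff] at hn
        rw [hfy, if_neg hn.2]
      have hdecomp : x - proj f e Λ x = (y - proj f e G y) + proj f e A' x := by
        have e1 : proj f e I x + proj f e G x = ∑ n ∈ I ∪ Λ, f n x • e n := by
          simp only [hGdef, proj]
          rw [← Finset.sum_union Finset.disjoint_sdiff, Finset.union_sdiff_self_eq_union]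
        have e2 : proj f e Λ x + proj f e A' x = ∑ n ∈ I ∪ Λ, f n x • e n := by
          simp only [hA'def, proj]
          rw [← Finset.sum_union Finset.disjoint_sdiff, Finset.union_sdiff_self_eq_union,
            Finset.union_comm]
        have h3 : proj f e I x + proj f e G x = proj f e Λ x + proj f e A' x :=
          e1.trans e2.symm
        rw [hPGy, hydef]
        have h5 : proj f e Λ x = proj f e I x + proj f e G x - proj f e A' x := by
          rw [h3]; abel
        rw [h5]; abel
      -- card comparison
      have hcardGA : A'.card ≤ G.card := by
        have c1 : A'.card + (I ∩ Λ).card = I.card := by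
          rw [hA'def]; exact Finset.card_sdiff_add_card_inter I Λ
        have c2 : G.card + (Λ ∩ I).card = Λ.card := by
          rw [hGdef]; exact Finset.card_sdiff_add_card_inter Λ I
        have c3 : (I ∩ Λ).card = (Λ ∩ I).card := by rw [Finset.inter_comm]
        have c4 : I.card ≤ Λ.card := le_trans hIcard hmΛ
        omega
      -- order comparison : G < A'
      have hordGA : ∀ b' ∈ G, ∀ a' ∈ A', b' < a' := by
        intro b' hb' a' ha'
        rw [hGdef, Finset.mem_sdiff] at hb'
        rw [hA'def, Finset.mem_sdiff] at ha'
        have hb'b : b' ≤ b := hΛb b' hb'.1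
        have hb'a : b' < a := by
          by_contra hcon
          exact hb'.2 (Finset.mem_Icc.2 ⟨by omega, hb'b⟩)
        have : a ≤ a' := (Finset.mem_Icc.1 ha'.1).1
        omega
      -- bound on ‖proj A' x‖
      have hM0 : (0:ℝ) ≤ C * ‖∑ n ∈ G, e n‖ := by positivity
      have hband : ∀ D ⊆ A', ‖∑ n ∈ D, e n‖ ≤ C * ‖∑ n ∈ G, e n‖ := by
        intro D hD
        refine hrc D G (fun b' hb' a' ha' => hordGA b' hb' a' (hD ha')) ?_
        exact le_trans (Finset.card_le_card hD) hcardGA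
      have hPA' : ‖proj f e A' x‖ ≤ 2 * t * (C * ‖∑ n ∈ G, e n‖) := by
        rw [proj]
        exact conv_signed e A' (fun n => f n x) t _ ht0 hM0 htA hband
      -- bound : t * ‖1_G‖ ≤ 4 Q^2 ‖y‖
      have hbound3 : t * ‖∑ n ∈ G, e n‖ ≤ 4 * Q ^ 2 * ‖y‖ := by
        rcases eq_or_lt_of_le ht0 with ht0' | htpos
        · rw [← ht0', zero_mul]; positivity
        rcases G.eq_empty_or_nonempty with hGe | hGne
        · rw [hGe]; simp only [Finset.sum_empty, norm_zero, mul_zero]; positivity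
        · set c : ℕ → ℝ := fun n => |f n y|⁻¹ with hcdef
          set K : ℝ := Q * ‖y‖ with hKdef
          have hK0 : 0 ≤ K := by positivity
          have hKproj : ∀ D : Finset ℕ, GreedySet f y D → ‖proj f e D y‖ ≤ K := by
            intro D hD
            have := proj_norm_le C hC hsupp y D hD
            rw [hKdef, hQdef]; linarith
          have hanti : ∀ n ∈ G, ∀ m' ∈ G, |f n y| ≤ |f m' y| → c m' ≤ c n := by
            intro n hn m' _ hle
            exact inv_anti₀ (lt_of_lt_of_le htpos (htG n hn)) hle
          obtain ⟨n₀, hn₀, hmin₀⟩ := G.exists_min_image (fun n => |f n y|) hGne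
          have htrunc := trunc_abel f e y c K hK0 hKproj G hGgreedy hanti 0
            (fun n _ => inv_nonneg.2 (abs_nonneg _)) n₀ hn₀ hmin₀
          set w : X := ∑ n ∈ G, (c n * f n y) • e n with hwdef
          have hn₀pos : 0 < |f n₀ y| := lt_of_lt_of_le htpos (htG n₀ hn₀)
          have hcn₀ : t * c n₀ ≤ 1 := by
            rw [hcdef]
            have h6 : t ≤ |f n₀ y| := htG n₀ hn₀
            rw [mul_inv_le_iff₀ hn₀pos, one_mul]
            exact h6
          have hcn₀0 : 0 ≤ c n₀ := inv_nonneg.2 (abs_nonneg _)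
          have hwnorm : ‖w‖ ≤ 2 * c n₀ * K := by
            have h7 : ‖proj f e G y‖ ≤ K := hKproj G hGgreedy
            have h8 : ‖c n₀ • proj f e G y‖ ≤ c n₀ * K := by
              rw [norm_smul, Real.norm_eq_abs, abs_of_nonneg hcn₀0]
              exact mul_le_mul_of_nonneg_left h7 hcn₀0
            calc ‖w‖ = ‖(w - c n₀ • proj f e G y) + c n₀ • proj f e G y‖ := by
                  congr 1
                  abel
              _ ≤ ‖w - c n₀ • proj f e G y‖ + ‖c n₀ • proj f e G y‖ := norm_add_le _ _
              _ ≤ (c n₀ - 0) * K + c n₀ * K := add_le_add htrunc h8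
              _ = 2 * c n₀ * K := by ring
          have hs1 : ∀ n ∈ G, |c n * f n y| = 1 := by
            intro n hn
            have hnpos : 0 < |f n y| := lt_of_lt_of_le htpos (htG n hn)
            rw [hcdef, abs_mul, abs_inv, abs_abs]
            exact inv_mul_cancel₀ (ne_of_gt hnpos)
          have hsign : ‖∑ n ∈ G, e n‖ ≤ 2 * Q * ‖w‖ := by
            have h9 := ind_of_signed hbi C hC hsupp G (fun n => c n * f n y) hs1
            rw [hwdef]
            calc ‖∑ n ∈ G, e n‖ ≤ 2 * (C + 1) * ‖∑ n ∈ G, (c n * f n y) • e n‖ := h9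
              _ = 2 * Q * ‖∑ n ∈ G, (c n * f n y) • e n‖ := by rw [hQdef]
          calc t * ‖∑ n ∈ G, e n‖ ≤ t * (2 * Q * ‖w‖) :=
                mul_le_mul_of_nonneg_left hsign ht0
            _ ≤ t * (2 * Q * (2 * c n₀ * K)) := by
                refine mul_le_mul_of_nonneg_left ?_ ht0
                exact mul_le_mul_of_nonneg_left hwnorm (by positivity)
            _ = 4 * Q * K * (t * c n₀) := by ring
            _ ≤ 4 * Q * K * 1 := by
                refine mul_le_mul_of_nonneg_left hcn₀ (by positivity)
            _ = 4 * Q ^ 2 * ‖y‖ := by rw [hKdef]; ring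
      -- assemble
      have hfinal : ‖x - proj f e Λ x‖ ≤ C' * ‖y‖ := by
        calc ‖x - proj f e Λ x‖ = ‖(y - proj f e G y) + proj f e A' x‖ := by rw [hdecomp]
          _ ≤ ‖y - proj f e G y‖ + ‖proj f e A' x‖ := norm_add_le _ _
          _ ≤ C * ‖y‖ + 2 * t * (C * ‖∑ n ∈ G, e n‖) :=
              add_le_add (hsupp y G hGgreedy) hPA'
          _ ≤ C * ‖y‖ + 2 * C * (4 * Q ^ 2 * ‖y‖) := by
              have : 2 * t * (C * ‖∑ n ∈ G, e n‖) = 2 * C * (t * ‖∑ n ∈ G, e n‖) := by ring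
              rw [this]
              refine add_le_add_right (mul_le_mul_of_nonneg_left hbound3 (by positivity)) _
          _ = C' * ‖y‖ := by rw [hC'def]; ring
      exact hfinal
  -- pass to the infimum
  have hne : Set.Nonempty {r : ℝ | ∃ I : Finset ℕ,
      (I = ∅ ∨ ∃ a b : ℕ, a ≤ b ∧ I = Finset.Icc a b ∧ ∀ n ∈ Λ, n ≤ b) ∧
      I.card ≤ m ∧ r = ‖x - proj f e I x‖} :=
    ⟨‖x - proj f e (∅ : Finset ℕ) x‖, ⟨∅, Or.inl rfl, by simp, rfl⟩⟩
  unfold checkSigma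
  rw [mul_comm, ← div_le_iff₀ hC'0]
  refine le_csInf hne ?_
  rintro r ⟨I, hI, hIc, rfl⟩
  rw [div_le_iff₀ hC'0, mul_comm]
  exact hkey I hI hIc
end
end

section
/- Let λ > 1 and let X be the completion of c_00 under ‖x‖ = sup_{π,π'}(Σ_{n∈D} |x_n|/√(π(n)) + Σ_{n∉D} |x_n|/π'(n)), with D = {2^n : n ≥ 0} and π: D → ℕ, π': ℕ\D → ℕ bijections. Then the canonical basis is (λ, reverse conservative of type II): there exists C = C(λ) such that ‖1_A‖ ≤ C‖1_B‖ for all finite nonempty A, B ⊂ ℕ with (λ−1)s(A) + |A| ≤ |B| and B < A. -/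
open Finset Filter

noncomputable section

/-- The set `D = {2^k : k ≥ 0}`. -/
def Dset : Set ℕ := {n | ∃ k : ℕ, n = 2 ^ k}

attribute [local instance] Classical.propDecidable

/-- The norm `‖x‖ = sup_{π,π'} (∑_{n ∈ D} |x_n|/√(π(n)) + ∑_{n ∉ D} |x_n|/π'(n))`,
where `π : D → {1,2,…}` and `π' : ℕ∖D → {1,2,…}` range over bijections
(here realized as equivalences onto `ℕ = {0,1,…}`, with weights shifted by 1). -/
def Nrm (x : ℕ →₀ ℝ) : ℝ :=
  ⨆ (π : Dset ≃ ℕ) (π' : ↥(Dsetᶜ) ≃ ℕ),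
    ∑ n ∈ x.support,
      if h : n ∈ Dset then |x n| / Real.sqrt ((π ⟨n, h⟩ : ℝ) + 1)
      else |x n| / ((π' ⟨n, h⟩ : ℝ) + 1)

/-- `1_A` as a finitely supported sequence. -/
def ind (A : Finset ℕ) : ℕ →₀ ℝ := ∑ n ∈ A, Finsupp.single n (1 : ℝ)

/- ======================= auxiliary material ======================= -/

lemma dset_infinite : Dset.Infinite := by
  refine Set.infinite_of_injective_forall_mem (f := fun k : ℕ => 2 ^ k) ?_ ?_
  · intro a b hab
    exact Nat.pow_right_injective (le_refl 2) hab
  · intro k; exact ⟨k, rfl⟩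

lemma dsetc_infinite : (Dsetᶜ : Set ℕ).Infinite := by
  refine Set.infinite_of_injective_forall_mem (f := fun k : ℕ => 2 * k + 3) ?_ ?_
  · intro a b hab; simp only at hab; omega
  · intro k
    rintro ⟨j, hj⟩
    rcases j with _ | j
    · omega
    · rw [pow_succ] at hj
      omega

instance : Infinite ↥Dset := dset_infinite.to_subtype
instance : Infinite ↥(Dsetᶜ : Set ℕ) := dsetc_infinite.to_subtype

lemma nonempty_eD : Nonempty (Dset ≃ ℕ) := by
  obtain ⟨d⟩ := nonempty_denumerable ↥Dset
  exact ⟨@Denumerable.eqv _ d⟩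

lemma nonempty_eDc : Nonempty (↥(Dsetᶜ) ≃ ℕ) := by
  obtain ⟨d⟩ := nonempty_denumerable ↥(Dsetᶜ : Set ℕ)
  exact ⟨@Denumerable.eqv _ d⟩

lemma ind_apply (A : Finset ℕ) (n : ℕ) : ind A n = if n ∈ A then 1 else 0 := by
  classical
  rw [ind, Finsupp.finset_sum_apply]
  simp [Finsupp.single_apply]


lemma ind_support (A : Finset ℕ) : (ind A).support = A := by
  ext n
  simp [Finsupp.mem_support_iff, ind_apply]


/-- the `D`-part of `A` -/
def Pp (A : Finset ℕ) : Finset ℕ := A.filter (· ∈ Dset)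

/-- the non-`D`-part of `A` -/
def Qq (A : Finset ℕ) : Finset ℕ := A.filter (· ∉ Dset)

lemma mem_Pp {A : Finset ℕ} {n : ℕ} (h : n ∈ Pp A) : n ∈ Dset := (Finset.mem_filter.mp h).2
lemma mem_Qq {A : Finset ℕ} {n : ℕ} (h : n ∈ Qq A) : n ∈ (Dsetᶜ : Set ℕ) := (Finset.mem_filter.mp h).2

lemma Pp_card_add_Qq_card (A : Finset ℕ) : (Pp A).card + (Qq A).card = A.card := by
  classical
  have := Finset.card_filter_add_card_filter_not (s := A) (p := (· ∈ Dset))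
  convert this using 2 <;> simp [Pp, Qq]

/-- the quantity inside the sup defining `Nrm (ind A)` -/
def F (A : Finset ℕ) (π : Dset ≃ ℕ) (π' : ↥(Dsetᶜ) ≃ ℕ) : ℝ :=
  ∑ n ∈ A, if h : n ∈ Dset then 1 / Real.sqrt ((π ⟨n, h⟩ : ℝ) + 1)
    else 1 / ((π' ⟨n, h⟩ : ℝ) + 1)

lemma Nrm_ind (A : Finset ℕ) : Nrm (ind A) = ⨆ π, ⨆ π', F A π π' := by
  unfold Nrm F
  apply iSup_congr; intro π
  apply iSup_congr; intro π'
  rw [ind_support]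
  apply Finset.sum_congr rfl
  intro n hn
  have h1 : ind A n = 1 := by rw [ind_apply, if_pos hn]
  rw [h1]
  norm_num


lemma F_split (A : Finset ℕ) (π : Dset ≃ ℕ) (π' : ↥(Dsetᶜ) ≃ ℕ) :
    F A π π' =
      (∑ n ∈ (Pp A).attach, 1 / Real.sqrt ((π ⟨n.1, mem_Pp n.2⟩ : ℝ) + 1))
      + ∑ n ∈ (Qq A).attach, 1 / ((π' ⟨n.1, mem_Qq n.2⟩ : ℝ) + 1) := by
  rw [F, ← Finset.sum_filter_add_sum_filter_not A (· ∈ Dset)]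
  congr 1
  · rw [← Finset.sum_attach (A.filter (· ∈ Dset))]
    apply Finset.sum_congr rfl
    intro n _
    rw [dif_pos (mem_Pp n.2)]
  · rw [← Finset.sum_attach (A.filter (· ∉ Dset))]
    apply Finset.sum_congr rfl
    intro n _
    rw [dif_neg (mem_Qq n.2)]

/-- rearrangement bound: a sum of an antitone function over a finset is at most
the sum over an initial segment of the same size. -/
lemma sum_le_sum_range (f : ℕ → ℝ) (hf : ∀ i j, i ≤ j → f j ≤ f i) (T : Finset ℕ) :
    ∑ j ∈ T, f j ≤ ∑ j ∈ Finset.range T.card, f j := by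
  classical
  obtain ⟨n, hn⟩ : ∃ n, T.card = n := ⟨_, rfl⟩
  induction n generalizing T with
  | zero => rw [Finset.card_eq_zero.mp hn]; simp
  | succ n ih =>
    have hne : T.Nonempty := Finset.card_pos.mp (by omega)
    rw [hn]
    set m := T.max' hne with hm
    have hmem : m ∈ T := T.max'_mem hne
    have hsub : T ⊆ Finset.range (m + 1) := by
      intro x hx
      exact Finset.mem_range.mpr (Nat.lt_succ_of_le (T.le_max' x hx))
    have hnm : n ≤ m := by
      have := Finset.card_le_card hsub
      simp [hn] at this; omega
    have hc : (T.erase m).card = n := by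
      rw [Finset.card_erase_of_mem hmem, hn]; omega
    calc ∑ j ∈ T, f j = ∑ j ∈ T.erase m, f j + f m := by
            rw [Finset.sum_erase_add _ _ hmem]
      _ ≤ ∑ j ∈ Finset.range n, f j + f n := by
            apply add_le_add
            · have := ih (T.erase m) hc
              rwa [hc] at this
            · exact hf n m hnm
      _ = ∑ j ∈ Finset.range (n+1), f j := (Finset.sum_range_succ f n).symm

lemma attach_sum_le (S : Finset ℕ) (u : {x // x ∈ S} → ℕ)
    (hu : Function.Injective u) (f : ℕ → ℝ) (hf : ∀ i j, i ≤ j → f j ≤ f i) :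
    ∑ n ∈ S.attach, f (u n) ≤ ∑ j ∈ Finset.range S.card, f j := by
  classical
  rw [← Finset.sum_image (g := u) (f := f) (by intro x _ y _ h; exact hu h)]
  have hc : (S.attach.image u).card = S.card := by
    rw [Finset.card_image_of_injective _ hu, Finset.card_attach]
  rw [← hc]
  exact sum_le_sum_range f hf _

lemma attach_sum_eq (S : Finset ℕ) (u : {x // x ∈ S} → ℕ)
    (hu : Function.Injective u) (hlt : ∀ n, u n < S.card) (f : ℕ → ℝ) :
    ∑ n ∈ S.attach, f (u n) = ∑ j ∈ Finset.range S.card, f j := by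
  classical
  rw [← Finset.sum_image (g := u) (f := f) (by intro x _ y _ h; exact hu h)]
  have hc : (S.attach.image u).card = S.card := by
    rw [Finset.card_image_of_injective _ hu, Finset.card_attach]
  have hsub : S.attach.image u ⊆ Finset.range S.card := by
    intro x hx
    obtain ⟨n, _, rfl⟩ := Finset.mem_image.mp hx
    exact Finset.mem_range.mpr (hlt n)
  have : S.attach.image u = Finset.range S.card :=
    Finset.eq_of_subset_of_card_le hsub (by rw [hc, Finset.card_range])
  rw [this]

/-- partial sums of `1/√(j+1)` -/
lemma sum_one_div_sqrt_le (N : ℕ) :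
    ∑ j ∈ Finset.range N, 1 / Real.sqrt ((j : ℝ) + 1) ≤ 2 * Real.sqrt N := by
  induction N with
  | zero => simp
  | succ n ih =>
    rw [Finset.sum_range_succ]
    have hb : (0:ℝ) < Real.sqrt ((n:ℝ) + 1) := Real.sqrt_pos.mpr (by positivity)
    have ha : (0:ℝ) ≤ Real.sqrt n := Real.sqrt_nonneg _
    have ha2 : Real.sqrt n ^ 2 = (n:ℝ) := Real.sq_sqrt (by positivity)
    have hb2 : Real.sqrt ((n:ℝ)+1) ^ 2 = (n:ℝ)+1 := Real.sq_sqrt (by positivity)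
    have key : 2 * Real.sqrt n + 1 / Real.sqrt ((n:ℝ)+1) ≤ 2 * Real.sqrt ((n:ℝ)+1) := by
      have h3 : 1 / Real.sqrt ((n:ℝ)+1) ≤ 2 * (Real.sqrt ((n:ℝ)+1) - Real.sqrt n) := by
        rw [div_le_iff₀ hb]
        nlinarith [sq_nonneg (Real.sqrt n - Real.sqrt ((n:ℝ)+1))]
      linarith
    have : ((n:ℝ)+1) = ((n+1 : ℕ) : ℝ) := by push_cast; ring
    calc _ ≤ 2 * Real.sqrt n + 1 / Real.sqrt ((n:ℝ)+1) := by linarith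
      _ ≤ 2 * Real.sqrt ((n:ℝ)+1) := key
      _ = 2 * Real.sqrt ((n+1:ℕ)) := by rw [this]

/-- harmonic partial sums -/
def hsum (N : ℕ) : ℝ := ∑ j ∈ Finset.range N, 1 / ((j : ℝ) + 1)

lemma hsum_nonneg (N : ℕ) : 0 ≤ hsum N := by
  apply Finset.sum_nonneg; intro j _; positivity

lemma hsum_mono : Monotone hsum := by
  intro a b hab
  apply Finset.sum_le_sum_of_subset_of_nonneg (Finset.range_subset_range.mpr hab)
  intro j _ _; positivity

lemma hsum_add_le (a b : ℕ) : hsum (a + b) ≤ hsum a + hsum b := by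
  unfold hsum
  rw [Finset.sum_range_add]
  apply add_le_add_right
  apply Finset.sum_le_sum
  intro j _
  have : (0:ℝ) < (j:ℝ) + 1 := by positivity
  apply one_div_le_one_div_of_le this
  push_cast; linarith [Nat.cast_nonneg (α := ℝ) a]

lemma one_le_hsum {N : ℕ} (h : 1 ≤ N) : 1 ≤ hsum N := by
  have : hsum 1 ≤ hsum N := by
    apply Finset.sum_le_sum_of_subset_of_nonneg (Finset.range_subset_range.mpr h)
    intro j _ _; positivity
  have h1 : hsum 1 = 1 := by simp [hsum]
  linarith

lemma log_le_hsum (N : ℕ) : Real.log ((N : ℝ) + 1) ≤ hsum N := by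
  have := log_add_one_le_harmonic N
  have hh : (harmonic N : ℝ) = hsum N := by
    unfold hsum harmonic
    push_cast
    apply Finset.sum_congr rfl
    intro j _
    rw [one_div]
  rw [hh] at this
  convert this using 2
  push_cast; ring

lemma hsum_le_sqrt_sum (N : ℕ) :
    hsum N ≤ ∑ j ∈ Finset.range N, 1 / Real.sqrt ((j : ℝ) + 1) := by
  apply Finset.sum_le_sum
  intro j _
  have h1 : (0:ℝ) < Real.sqrt ((j:ℝ)+1) := Real.sqrt_pos.mpr (by positivity)
  apply one_div_le_one_div_of_le h1
  calc Real.sqrt ((j:ℝ)+1) ≤ Real.sqrt ((j:ℝ)+1) * Real.sqrt ((j:ℝ)+1) := by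
        nlinarith [Real.one_le_sqrt.mpr (by push_cast; linarith [Nat.cast_nonneg (α := ℝ) j] : (1:ℝ) ≤ (j:ℝ)+1)]
    _ = (j:ℝ)+1 := Real.mul_self_sqrt (by positivity)

lemma F_le_card (A : Finset ℕ) (π : Dset ≃ ℕ) (π' : ↥(Dsetᶜ) ≃ ℕ) :
    F A π π' ≤ A.card := by
  unfold F
  have : ∀ n ∈ A, (if h : n ∈ Dset then 1 / Real.sqrt ((π ⟨n, h⟩ : ℝ) + 1)
      else 1 / ((π' ⟨n, h⟩ : ℝ) + 1)) ≤ 1 := by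
    intro n _
    split_ifs with h
    · rw [div_le_one (Real.sqrt_pos.mpr (by positivity))]
      exact Real.one_le_sqrt.mpr (by linarith [Nat.cast_nonneg (α := ℝ) (π ⟨n, h⟩)])
    · rw [div_le_one (by positivity)]
      linarith [Nat.cast_nonneg (α := ℝ) (π' ⟨n, h⟩)]
  calc _ ≤ ∑ _n ∈ A, (1:ℝ) := Finset.sum_le_sum this
    _ = A.card := by simp

lemma F_le_Nrm (A : Finset ℕ) (π : Dset ≃ ℕ) (π' : ↥(Dsetᶜ) ≃ ℕ) :
    F A π π' ≤ Nrm (ind A) := by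
  haveI := nonempty_eD
  haveI := nonempty_eDc
  rw [Nrm_ind]
  have bdd2 : ∀ π0 : Dset ≃ ℕ, BddAbove (Set.range fun π'0 => F A π0 π'0) := fun π0 =>
    ⟨A.card, by rintro x ⟨π'0, rfl⟩; exact F_le_card A π0 π'0⟩
  have h1 : F A π π' ≤ ⨆ π'0, F A π π'0 := le_ciSup (bdd2 π) π'
  have h2 : (⨆ π'0, F A π π'0) ≤ ⨆ π0, ⨆ π'0, F A π0 π'0 := by
    refine le_ciSup (f := fun π0 => ⨆ π'0, F A π0 π'0) ⟨A.card, ?_⟩ π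
    rintro x ⟨π0, rfl⟩
    exact ciSup_le fun π'0 => F_le_card A π0 π'0
  linarith

lemma Nrm_ind_le (A : Finset ℕ) :
    Nrm (ind A) ≤ 2 * Real.sqrt ((Pp A).card) + hsum ((Qq A).card) := by
  haveI := nonempty_eD
  haveI := nonempty_eDc
  rw [Nrm_ind]
  apply ciSup_le; intro π
  apply ciSup_le; intro π'
  rw [F_split]
  have hf1 : ∀ i j : ℕ, i ≤ j → 1 / Real.sqrt ((j:ℝ)+1) ≤ 1 / Real.sqrt ((i:ℝ)+1) := by
    intro i j hij
    apply one_div_le_one_div_of_le (Real.sqrt_pos.mpr (by positivity))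
    apply Real.sqrt_le_sqrt
    have : (i:ℝ) ≤ (j:ℝ) := Nat.cast_le.mpr hij
    linarith
  have hf2 : ∀ i j : ℕ, i ≤ j → 1 / ((j:ℝ)+1) ≤ 1 / ((i:ℝ)+1) := by
    intro i j hij
    apply one_div_le_one_div_of_le (by positivity)
    have : (i:ℝ) ≤ (j:ℝ) := Nat.cast_le.mpr hij
    linarith
  apply add_le_add
  · have hinj : Function.Injective (fun n : {x // x ∈ Pp A} => π ⟨n.1, mem_Pp n.2⟩) := by
      intro a b h
      simp only at h
      have := π.injective h
      exact Subtype.ext (congrArg (fun z => z.1) this)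
    calc ∑ n ∈ (Pp A).attach, 1 / Real.sqrt ((π ⟨n.1, mem_Pp n.2⟩ : ℝ) + 1)
        ≤ ∑ j ∈ Finset.range (Pp A).card, 1 / Real.sqrt ((j:ℝ)+1) :=
          attach_sum_le (Pp A) _ hinj (fun j => 1 / Real.sqrt ((j:ℝ)+1)) hf1
      _ ≤ 2 * Real.sqrt ((Pp A).card) := sum_one_div_sqrt_le _
  · have hinj : Function.Injective (fun n : {x // x ∈ Qq A} => π' ⟨n.1, mem_Qq n.2⟩) := by
      intro a b h
      simp only at h
      have := π'.injective h
      exact Subtype.ext (congrArg (fun z => z.1) this)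
    exact attach_sum_le (Qq A) _ hinj (fun j => 1 / ((j:ℝ)+1)) hf2

/-- a permutation of `ℕ` mapping a given finset into an initial segment -/
lemma exists_perm_maps_lt (S : Finset ℕ) : ∃ σ : ℕ ≃ ℕ, ∀ s ∈ S, σ s < S.card := by
  classical
  set n := S.card with hn
  have hcard : S.card = (Finset.range n).card := by simp [hn]
  let e1 : {x // x ∈ S} ≃ {x // x ∈ Finset.range n} := Finset.equivOfCardEq hcard
  let eS : ↥(↑S : Set ℕ) ≃ {x // x ∈ S} := Equiv.subtypeEquivRight (fun x => Finset.mem_coe)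
  let eR : {x // x ∈ Finset.range n} ≃ ↥(↑(Finset.range n) : Set ℕ) :=
    Equiv.subtypeEquivRight (fun x => Finset.mem_coe.symm)
  have h1 : ((↑S : Set ℕ)ᶜ).Infinite := Set.Finite.infinite_compl S.finite_toSet
  have h2 : ((↑(Finset.range n) : Set ℕ)ᶜ).Infinite :=
    Set.Finite.infinite_compl (Finset.range n).finite_toSet
  haveI := h1.to_subtype
  haveI := h2.to_subtype
  obtain ⟨d1⟩ := nonempty_denumerable ↥((↑S : Set ℕ)ᶜ)
  obtain ⟨d2⟩ := nonempty_denumerable ↥((↑(Finset.range n) : Set ℕ)ᶜ)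
  let e2 : ↥((↑S : Set ℕ)ᶜ) ≃ ↥((↑(Finset.range n) : Set ℕ)ᶜ) :=
    (@Denumerable.eqv _ d1).trans (@Denumerable.eqv _ d2).symm
  let g : ↥(↑S : Set ℕ) ≃ ↥(↑(Finset.range n) : Set ℕ) := eS.trans (e1.trans eR)
  let σ : ℕ ≃ ℕ := ((Equiv.Set.sumCompl (↑S : Set ℕ)).symm.trans
      (Equiv.sumCongr g e2)).trans (Equiv.Set.sumCompl (↑(Finset.range n) : Set ℕ))
  refine ⟨σ, ?_⟩
  intro s hs
  have hmem : s ∈ (↑S : Set ℕ) := hs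
  have hstep : (Equiv.Set.sumCompl (↑S : Set ℕ)).symm s = Sum.inl ⟨s, hmem⟩ :=
    Equiv.Set.sumCompl_symm_apply_of_mem hmem
  have hσ : σ s = ((g ⟨s, hmem⟩ : ↥(↑(Finset.range n) : Set ℕ)) : ℕ) := by
    simp only [σ, Equiv.trans_apply, hstep, Equiv.sumCongr_apply, Sum.map_inl,
      Equiv.Set.sumCompl_apply_inl]
  rw [hσ]
  have hy := (g ⟨s, hmem⟩).2
  rw [Finset.mem_coe, Finset.mem_range] at hy
  exact hy

lemma exists_equiv_lt {α : Type*} (e₀ : α ≃ ℕ) (T : Finset α) :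
    ∃ π : α ≃ ℕ, ∀ t ∈ T, π t < T.card := by
  classical
  obtain ⟨σ, hσ⟩ := exists_perm_maps_lt (T.image e₀)
  refine ⟨e₀.trans σ, ?_⟩
  intro t ht
  have h1 : e₀ t ∈ T.image e₀ := Finset.mem_image_of_mem _ ht
  have h2 := hσ _ h1
  rwa [Finset.card_image_of_injective _ e₀.injective] at h2

lemma hsum_le_Nrm_ind (B : Finset ℕ) : hsum B.card ≤ Nrm (ind B) := by
  classical
  obtain ⟨e₀⟩ := nonempty_eD
  obtain ⟨e₀'⟩ := nonempty_eDc
  let emb : {x // x ∈ Pp B} ↪ ↥Dset :=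
    ⟨fun n => ⟨n.1, mem_Pp n.2⟩, by
      intro a b h
      exact Subtype.ext (congrArg (fun z => z.1) h)⟩
  let emb' : {x // x ∈ Qq B} ↪ ↥(Dsetᶜ : Set ℕ) :=
    ⟨fun n => ⟨n.1, mem_Qq n.2⟩, by
      intro a b h
      exact Subtype.ext (congrArg (fun z => z.1) h)⟩
  let T : Finset ↥Dset := (Pp B).attach.map emb
  let T' : Finset ↥(Dsetᶜ : Set ℕ) := (Qq B).attach.map emb'
  have hTcard : T.card = (Pp B).card := by simp [T]
  have hT'card : T'.card = (Qq B).card := by simp [T']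
  obtain ⟨π, hπ⟩ := exists_equiv_lt e₀ T
  obtain ⟨π', hπ'⟩ := exists_equiv_lt e₀' T'
  have hinj : Function.Injective (fun n : {x // x ∈ Pp B} => π ⟨n.1, mem_Pp n.2⟩) := by
    intro a b h
    simp only at h
    exact Subtype.ext (congrArg (fun z => z.1) (π.injective h))
  have hinj' : Function.Injective (fun n : {x // x ∈ Qq B} => π' ⟨n.1, mem_Qq n.2⟩) := by
    intro a b h
    simp only at h
    exact Subtype.ext (congrArg (fun z => z.1) (π'.injective h))
  have hlt : ∀ n : {x // x ∈ Pp B}, π ⟨n.1, mem_Pp n.2⟩ < (Pp B).card := by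
    intro n
    have : (⟨n.1, mem_Pp n.2⟩ : ↥Dset) ∈ T := Finset.mem_map_of_mem emb (Finset.mem_attach _ n)
    have := hπ _ this
    rwa [hTcard] at this
  have hlt' : ∀ n : {x // x ∈ Qq B}, π' ⟨n.1, mem_Qq n.2⟩ < (Qq B).card := by
    intro n
    have : (⟨n.1, mem_Qq n.2⟩ : ↥(Dsetᶜ : Set ℕ)) ∈ T' :=
      Finset.mem_map_of_mem emb' (Finset.mem_attach _ n)
    have := hπ' _ this
    rwa [hT'card] at this
  have key : F B π π' = (∑ j ∈ Finset.range (Pp B).card, 1 / Real.sqrt ((j:ℝ)+1))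
      + hsum ((Qq B).card) := by
    rw [F_split]
    congr 1
    · exact attach_sum_eq (Pp B) _ hinj hlt (fun j => 1 / Real.sqrt ((j:ℝ)+1))
    · exact attach_sum_eq (Qq B) _ hinj' hlt' (fun j => 1 / ((j:ℝ)+1))
  have hlow : hsum B.card ≤ F B π π' := by
    rw [key, ← Pp_card_add_Qq_card B]
    calc hsum ((Pp B).card + (Qq B).card) ≤ hsum ((Pp B).card) + hsum ((Qq B).card) :=
          hsum_add_le _ _
      _ ≤ _ := add_le_add_left (hsum_le_sqrt_sum _) _
  exact hlow.trans (F_le_Nrm B π π')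

lemma spread_ge (A : Finset ℕ) (h2 : 2 ≤ (Pp A).card) :
    2 ^ ((Pp A).card - 2) ≤ spread A := by
  classical
  have hPne : (Pp A).Nonempty := Finset.card_pos.mp (by omega)
  have hAne : A.Nonempty := by
    obtain ⟨x, hx⟩ := hPne
    exact ⟨x, Finset.mem_of_mem_filter x hx⟩
  set m := (Pp A).max' hPne with hm
  have hmP : m ∈ Pp A := (Pp A).max'_mem hPne
  obtain ⟨k, hk⟩ := mem_Pp hmP
  have hcard_le : (Pp A).card ≤ k + 1 := by
    have hinj : Set.InjOn (Nat.log 2) (Pp A) := by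
      intro p hp q hq hlog
      obtain ⟨i, hi⟩ := mem_Pp hp
      obtain ⟨j, hj⟩ := mem_Pp hq
      rw [hi, hj] at hlog ⊢
      rw [Nat.log_pow (by norm_num), Nat.log_pow (by norm_num)] at hlog
      rw [hlog]
    have himg : (Pp A).image (Nat.log 2) ⊆ Finset.range (k + 1) := by
      intro x hx
      obtain ⟨p, hp, rfl⟩ := Finset.mem_image.mp hx
      have hple : p ≤ m := (Pp A).le_max' p hp
      obtain ⟨j, hj⟩ := mem_Pp hp
      rw [hj, hk] at hple
      have hjk : j ≤ k := (Nat.pow_le_pow_iff_right (by norm_num)).mp hple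
      rw [hj, Nat.log_pow (by norm_num)]
      exact Finset.mem_range.mpr (by omega)
    calc (Pp A).card = ((Pp A).image (Nat.log 2)).card :=
          (Finset.card_image_of_injOn hinj).symm
      _ ≤ (Finset.range (k + 1)).card := Finset.card_le_card himg
      _ = k + 1 := by simp
  obtain ⟨p, hp, hpm⟩ : ∃ p ∈ Pp A, p ≠ m := by
    by_contra hcon
    push_neg at hcon
    have hsub : Pp A ⊆ {m} := fun x hx => Finset.mem_singleton.mpr (hcon x hx)
    have := Finset.card_le_card hsub
    simp at this
    omega
  obtain ⟨j, hj⟩ := mem_Pp hp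
  have hple : p ≤ m := (Pp A).le_max' p hp
  have hjk : j < k := by
    rcases Nat.lt_or_ge j k with hcase | hcase
    · exact hcase
    · exfalso
      apply hpm
      have h2k : 2 ^ k ≤ 2 ^ j := Nat.pow_le_pow_right (by norm_num) hcase
      have hple' := hple
      rw [hj, hk] at hple'
      rw [hj, hk]
      omega
  have hk1 : 1 ≤ k := by omega
  have hpow : 2 ^ k = 2 * 2 ^ (k - 1) := by
    conv_lhs => rw [show k = (k - 1) + 1 by omega]
    ring
  have hp_le : p ≤ 2 ^ (k - 1) := by
    rw [hj]
    exact Nat.pow_le_pow_right (by norm_num) (by omega)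
  have hmA : m ∈ A := Finset.mem_of_mem_filter m hmP
  have hpA : p ∈ A := Finset.mem_of_mem_filter p hp
  have hmax : 2 ^ k ≤ A.max' hAne := hk ▸ A.le_max' m hmA
  have hmin : A.min' hAne ≤ 2 ^ (k - 1) := le_trans (A.min'_le p hpA) hp_le
  have hexp_le : (Pp A).card - 2 ≤ k - 1 := by omega
  rw [spread, dif_pos hAne]
  calc 2 ^ ((Pp A).card - 2) ≤ 2 ^ (k - 1) := Nat.pow_le_pow_right (by norm_num) hexp_le
    _ ≤ A.max' hAne - A.min' hAne + 1 := by omega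

set_option maxHeartbeats 1600000 in
/-- the canonical basis of `X` is (λ, reverse conservative of
type II) for every `λ > 1`. -/
theorem stmt_15 (l : ℝ) (hl : 1 < l) :
    ∃ C : ℝ, 0 < C ∧ ∀ A B : Finset ℕ, A.Nonempty → B.Nonempty →
      (l - 1) * spread A + (A.card : ℝ) ≤ (B.card : ℝ) →
      (∀ b ∈ B, ∀ a ∈ A, b < a) →
      Nrm (ind A) ≤ C * Nrm (ind B) := by
  classical
  set c := Real.log 2 with hc
  have hcpos : 0 < c := Real.log_pos (by norm_num)
  set a := Real.log (l - 1) with ha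
  set T : ℝ := 4 + 2 * max 0 (-a) / c with hT
  have hT4 : (4 : ℝ) ≤ T := by
    have h0 : (0:ℝ) ≤ 2 * max 0 (-a) / c := by positivity
    rw [hT]
    linarith
  set K : ℝ := max (2 / c) T with hK
  have hKT : T ≤ K := le_max_right _ _
  have hK2c : 2 / c ≤ K := le_max_left _ _
  clear_value c a T K
  have hK4 : (4 : ℝ) ≤ K := le_trans hT4 hKT
  refine ⟨2 * K + 1, by linarith, ?_⟩
  intro A B hA hB hcard _
  set N := (Pp A).card with hN
  set h := hsum B.card with hh
  clear_value N h
  have hB1 : 1 ≤ B.card := hB.card_pos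
  have hh1 : 1 ≤ h := by rw [hh]; exact one_le_hsum hB1
  have hhNrm : h ≤ Nrm (ind B) := by rw [hh]; exact hsum_le_Nrm_ind B
  have hsA : (0:ℝ) ≤ (spread A : ℝ) := Nat.cast_nonneg _
  have hl1 : (0:ℝ) < l - 1 := by linarith
  have hprod : (0:ℝ) ≤ (l - 1) * (spread A : ℝ) := mul_nonneg (le_of_lt hl1) hsA
  have hAB : (A.card : ℝ) ≤ B.card := by linarith
  have hABn : A.card ≤ B.card := Nat.cast_le.mp hAB
  have hQA : (Qq A).card ≤ B.card := by
    have h1 : (Qq A).card ≤ A.card := Finset.card_filter_le A _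
    omega
  have hhQ : hsum ((Qq A).card) ≤ h := by rw [hh]; exact hsum_mono hQA
  have hsqrtN : Real.sqrt N ≤ K * h := by
    have hKh : (0:ℝ) ≤ h := by linarith
    rcases Nat.lt_or_ge N 2 with hNlt | hNge
    · have hsle : Real.sqrt N ≤ 1 := Real.sqrt_le_one.mpr (by
        exact_mod_cast Nat.lt_succ_iff.mp hNlt)
      nlinarith
    · have hN1 : (1:ℝ) ≤ (N:ℝ) := by exact_mod_cast le_trans (by norm_num) hNge
      have hsq : Real.sqrt (N:ℝ) ≤ (N:ℝ) := by
        calc Real.sqrt (N:ℝ) ≤ Real.sqrt ((N:ℝ)^2) := Real.sqrt_le_sqrt (by nlinarith)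
          _ = (N:ℝ) := Real.sqrt_sq (by positivity)
      have hspread := spread_ge A (by rw [← hN]; exact hNge)
      rw [← hN] at hspread
      have hcast : ((2:ℝ))^(N - 2) ≤ (spread A : ℝ) := by exact_mod_cast hspread
      have hBge : (l - 1) * 2^(N - 2) ≤ (B.card : ℝ) := by
        have h1 : (l - 1) * (spread A : ℝ) ≤ B.card := by
          have : (0:ℝ) ≤ (A.card : ℝ) := Nat.cast_nonneg _
          linarith
        nlinarith
      have hNc : ((N - 2 : ℕ) : ℝ) = (N:ℝ) - 2 := by
        rw [Nat.cast_sub hNge]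
        norm_num
      have hlogB : a + ((N:ℝ) - 2) * c ≤ Real.log (B.card : ℝ) := by
        have hpos : (0:ℝ) < (l - 1) * 2^(N - 2) := by positivity
        have heq : a + ((N:ℝ) - 2) * c = Real.log ((l - 1) * 2^(N - 2)) := by
          rw [Real.log_mul (ne_of_gt hl1) (by positivity), Real.log_pow, hNc, hc, ha]
        rw [heq]
        exact Real.log_le_log hpos hBge
      have hlogh : Real.log (B.card : ℝ) ≤ h := by
        have hBpos : (0:ℝ) < (B.card : ℝ) := by exact_mod_cast hB1
        calc Real.log (B.card : ℝ) ≤ Real.log ((B.card : ℝ) + 1) :=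
              Real.log_le_log hBpos (by linarith)
          _ ≤ h := by rw [hh]; exact log_le_hsum B.card
      have hchain : a + ((N:ℝ) - 2) * c ≤ h := le_trans hlogB hlogh
      rcases le_or_gt T (N:ℝ) with hNT | hNT
      · have hTc : (T / 2 - 2) * c = max 0 (-a) := by
          rw [hT]
          field_simp
          ring
        have hTcN : T * c ≤ (N:ℝ) * c := mul_le_mul_of_nonneg_right hNT (le_of_lt hcpos)
        have hmax : -a ≤ max 0 (-a) := le_max_right _ _
        have hmid : (N:ℝ) * c / 2 ≤ a + ((N:ℝ) - 2) * c := by nlinarith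
        have h5 : (N:ℝ) * c / 2 ≤ h := le_trans hmid hchain
        have h6 : (N:ℝ) ≤ 2 / c * h := by
          have hNc2 : (N:ℝ) * c ≤ 2 * h := by linarith
          have hcne : c ≠ 0 := ne_of_gt hcpos
          calc (N:ℝ) = (N:ℝ) * c / c := by field_simp
            _ ≤ 2 * h / c := by gcongr
            _ = 2 / c * h := by ring
        calc Real.sqrt (N:ℝ) ≤ (N:ℝ) := hsq
          _ ≤ 2 / c * h := h6
          _ ≤ K * h := mul_le_mul_of_nonneg_right hK2c hKh
      · calc Real.sqrt (N:ℝ) ≤ (N:ℝ) := hsq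
          _ ≤ T := le_of_lt hNT
          _ ≤ T * h := by nlinarith
          _ ≤ K * h := mul_le_mul_of_nonneg_right hKT hKh
  have hup : Nrm (ind A) ≤ 2 * Real.sqrt N + hsum ((Qq A).card) := by
    rw [hN]; exact Nrm_ind_le A
  have hKpos : (0:ℝ) < 2 * K + 1 := by linarith
  calc Nrm (ind A) ≤ (2 * K + 1) * h := by linarith
    _ ≤ (2 * K + 1) * Nrm (ind B) := mul_le_mul_of_nonneg_left hhNrm (le_of_lt hKpos)
end
end
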